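/- If all finite powers of a Tychonoff space X are Lindelöf, then C_p(X) has countable tightness (Arhangel'skii–Pytkeev theorem, one direction). -/

import Mathlib

open Filter Topology Set

/-- `C_p(X)`: continuous real-valued functions on `X` with the topology of pointwise
convergence (inherited from the product topology on `X → ℝ`). -/
abbrev Cp (X : Type*) [TopologicalSpace X] : Type _ := {f : X → ℝ // Continuous f}

/-- Arhangel'skii–Pytkeev (one direction): if all finite powers of a Tychonoff space
`X` are Lindelöf, then `C_p(X)` has countable tightness. -/
theorem cp_countably_tight_of_finite_powers_lindelof
    {X : Type*} [TopologicalSpace X] [T35Space X]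
    (hLin : ∀ n : ℕ, LindelofSpace (Fin n → X)) :
    ∀ (A : Set (Cp X)) (f : Cp X), f ∈ closure A →
      ∃ B ⊆ A, B.Countable ∧ f ∈ closure B := by
  intro A f hf
  have key : ∀ n k : ℕ, ∃ r : Set A, r.Countable ∧
      ∀ x : Fin n → X, ∃ g ∈ r, ∀ i, |(g : Cp X).val (x i) - f.val (x i)| < 1/(k+1) := by
    intro n k
    haveI := hLin n
    have hpos : (0:ℝ) < 1/(k+1) := by positivity
    set W : A → Set (Fin n → X) :=
      fun g => {x | ∀ i, |(g : Cp X).val (x i) - f.val (x i)| < 1/(k+1)} with hW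
    have hWopen : ∀ g, IsOpen (W g) := by
      intro g
      have : W g = ⋂ i, {x : Fin n → X | |(g : Cp X).val (x i) - f.val (x i)| < 1/(k+1)} := by
        ext x; simp [hW, Set.mem_iInter]
      rw [this]
      exact isOpen_iInter_of_finite fun i =>
        isOpen_lt ((((g : Cp X).2.comp (continuous_apply i)).sub
          (f.2.comp (continuous_apply i))).abs) continuous_const
    have hcover : ∀ x : Fin n → X, ∃ g : A, x ∈ W g := by
      intro x
      set U : Set (Cp X) := {h | ∀ i, |h.val (x i) - f.val (x i)| < 1/(k+1)} with hU
      have hUopen : IsOpen U := by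
        have : U = ⋂ i, {h : Cp X | |h.val (x i) - f.val (x i)| < 1/(k+1)} := by
          ext h; simp [hU, Set.mem_iInter]
        rw [this]
        exact isOpen_iInter_of_finite fun i =>
          isOpen_lt ((((continuous_apply (x i)).comp continuous_subtype_val).sub
            continuous_const).abs) continuous_const
      have hfU : f ∈ U := by intro i; simpa using hpos
      obtain ⟨g, hgU, hgA⟩ := mem_closure_iff.mp hf U hUopen hfU
      exact ⟨⟨g, hgA⟩, hgU⟩
    obtain ⟨r, hrc, hrcov⟩ := (isLindelof_univ (X := Fin n → X)).elim_countable_subcover W hWopen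
      (fun x _ => Set.mem_iUnion.mpr (hcover x))
    refine ⟨r, hrc, fun x => ?_⟩
    have hx := hrcov (Set.mem_univ x)
    simp only [Set.mem_iUnion] at hx
    obtain ⟨g, hg, hxg⟩ := hx
    exact ⟨g, hg, hxg⟩
  choose r hrc hrcov using key
  refine ⟨⋃ n, ⋃ k, Subtype.val '' r n k, ?_, ?_, ?_⟩
  · exact Set.iUnion_subset fun n => Set.iUnion_subset fun k => Subtype.coe_image_subset A _
  · exact Set.countable_iUnion fun n => Set.countable_iUnion fun k => ((hrc n k).image _)
  · rw [mem_closure_iff_nhds]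
    intro s hs
    rw [nhds_induced] at hs
    obtain ⟨t, ht, hts⟩ := Filter.mem_comap.mp hs
    rw [nhds_pi] at ht
    obtain ⟨I, hIfin, t', ht', hsub⟩ := Filter.mem_pi.mp ht
    obtain ⟨n, e, he⟩ := hIfin.fin_embedding
    have hδ : ∀ j : Fin n, ∃ δ > 0, Metric.ball (f.val (e j)) δ ⊆ t' (e j) := fun j =>
      Metric.mem_nhds_iff.mp (ht' (e j))
    choose δ hδpos hδball using hδ
    have hk : ∀ j : Fin n, ∃ k : ℕ, 1/(k+1 : ℝ) < δ j := fun j =>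
      exists_nat_one_div_lt (hδpos j)
    choose kk hkk using hk
    set k := Finset.univ.sup kk with hkdef
    have hkle : ∀ j : Fin n, 1/(k+1 : ℝ) < δ j := by
      intro j
      refine lt_of_le_of_lt ?_ (hkk j)
      apply one_div_le_one_div_of_le
      · positivity
      · have : kk j ≤ k := Finset.le_sup (Finset.mem_univ j)
        exact_mod_cast Nat.succ_le_succ this
    obtain ⟨g, hg, hgclose⟩ := hrcov n k (fun j => e j)
    refine ⟨(g : Cp X), ?_, ?_⟩
    · apply hts
      apply hsub
      intro i hi
      rw [← he] at hi
      obtain ⟨j, rfl⟩ := hi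
      apply hδball j
      rw [Metric.mem_ball, Real.dist_eq]
      exact lt_trans (hgclose j) (hkle j)
    · exact Set.mem_iUnion.mpr ⟨n, Set.mem_iUnion.mpr ⟨k, ⟨g, hg, rfl⟩⟩⟩
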